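/- For every integer q ≥ 2 with q ∈ Q₅, there exists a finite connected simple graph G such that i(G) = q, the number of vertices of G is at most 5·log_φ q (where φ = (1+√5)/2), and the number of edges of G is at most 3 times the number of vertices of G. -/

import Mathlib

/-- The number of independent sets of a simple graph `G`
(including the empty set). -/
noncomputable def numIndep {V : Type*} (G : SimpleGraph V) : ℕ :=
  Nat.card {s : Set V // ∀ x ∈ s, ∀ y ∈ s, ¬ G.Adj x y}

/-- The continued fraction `[a₁,…,a_ℓ] = 1/(a₁+1/(a₂+⋯+1/a_ℓ))`. -/
def contFrac : List ℕ → ℚ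
  | [] => 0
  | a :: rest => 1 / ((a : ℚ) + contFrac rest)

/-- `QSet A` is the set of positive integers `q` such that `q = 1` or there is
`1 ≤ p < q` coprime to `q` with `p/q = [a₁,…,a_ℓ]` for some `a₁,…,a_ℓ ≤ A`. -/
def QSet (A : ℕ) : Set ℕ :=
  {q | q = 1 ∨ ∃ p : ℕ, 1 ≤ p ∧ p < q ∧ Nat.gcd p q = 1 ∧
    ∃ L : List ℕ, L ≠ [] ∧ (∀ a ∈ L, 1 ≤ a ∧ a ≤ A) ∧ contFrac L = (p : ℚ) / q}



def IsInd {V : Type*} (G : SimpleGraph V) (s : Set V) : Prop :=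
  ∀ x ∈ s, ∀ y ∈ s, ¬ G.Adj x y

lemma numIndep_def {V : Type*} (G : SimpleGraph V) :
    numIndep G = Nat.card {s : Set V // IsInd G s} := rfl

noncomputable def avoidCount {V : Type*} (G : SimpleGraph V) (Dp : V → Prop) : ℕ :=
  Nat.card {s : Set V // IsInd G s ∧ ∀ v ∈ s, ¬ Dp v}

noncomputable def pairCount {V : Type*} (G : SimpleGraph V) : ℕ :=
  Nat.card {p : V × V // G.Adj p.1 p.2}

abbrev SV (m : ℕ) (W : Type) : Type := Fin m ⊕ (Unit ⊕ W)

variable {W : Type}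

def stepAdj (m : ℕ) (G' : SimpleGraph W) (Dp : W → Prop) : SV m W → SV m W → Prop
  | Sum.inl i, Sum.inl j => i ≠ j
  | Sum.inl _, Sum.inr (Sum.inl _) => True
  | Sum.inr (Sum.inl _), Sum.inl _ => True
  | Sum.inr (Sum.inl _), Sum.inr (Sum.inr w) => Dp w
  | Sum.inr (Sum.inr w), Sum.inr (Sum.inl _) => Dp w
  | Sum.inr (Sum.inr v), Sum.inr (Sum.inr w) => G'.Adj v w
  | _, _ => False

def step (m : ℕ) (G' : SimpleGraph W) (Dp : W → Prop) : SimpleGraph (SV m W) where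
  Adj := stepAdj m G' Dp
  symm := by
    constructor
    rintro (i | ⟨u⟩ | w) (j | ⟨u'⟩ | w') h <;> simp_all [stepAdj]
    · exact Ne.symm h
    · exact h.symm
  loopless := by
    constructor
    rintro (i | ⟨u⟩ | w) h <;> simp_all [stepAdj]

/-- the distinguished region of the step graph : first block and path vertex -/
def stepD (m : ℕ) (W : Type) : SV m W → Prop
  | Sum.inr (Sum.inr _) => False
  | _ => True

def memA {m : ℕ} (s : Set (SV m W)) : Set (Fin m) := {i | Sum.inl i ∈ s}
def memW {m : ℕ} (s : Set (SV m W)) : Set W := {w | Sum.inr (Sum.inr w) ∈ s}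
def joinSet {m : ℕ} (t : Set (Fin m)) (he : Prop) (u : Set W) : Set (SV m W) :=
  {v | Sum.elim (· ∈ t) (Sum.elim (fun _ => he) (· ∈ u)) v}

section StepLemmas

variable {m : ℕ} {G' : SimpleGraph W} {Dp : W → Prop}

lemma ind_memA {s : Set (SV m W)} (hs : IsInd (step m G' Dp) s) :
    IsInd (⊤ : SimpleGraph (Fin m)) (memA s) := by
  intro i hi j hj hadj
  rw [SimpleGraph.top_adj] at hadj
  exact hs _ hi _ hj hadj

lemma ind_memW {s : Set (SV m W)} (hs : IsInd (step m G' Dp) s) :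
    IsInd G' (memW s) := fun w hw v hv hadj => hs _ hw _ hv hadj

lemma avoid_memW {s : Set (SV m W)} (hs : IsInd (step m G' Dp) s)
    (he : Sum.inr (Sum.inl ()) ∈ s) : ∀ w ∈ memW s, ¬ Dp w :=
  fun w hw hD => hs _ he _ hw hD

lemma empty_memA {s : Set (SV m W)} (hs : IsInd (step m G' Dp) s)
    (he : Sum.inr (Sum.inl ()) ∈ s) : ∀ i, Sum.inl i ∉ s :=
  fun i hi => hs _ hi _ he trivial

lemma ind_joinSet_false {t : Set (Fin m)} {u : Set W}
    (ht : IsInd (⊤ : SimpleGraph (Fin m)) t) (hu : IsInd G' u) :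
    IsInd (step m G' Dp) (joinSet t False u) := by
  rintro (i | ⟨e⟩ | w) hx (j | ⟨e'⟩ | v) hy hadj <;>
    simp only [joinSet, Set.mem_setOf_eq, Sum.elim_inl, Sum.elim_inr] at hx hy <;>
    try exact hx.elim <;> try exact hy.elim
  · exact ht i hx j hy (by simpa using (show i ≠ j from hadj))
  · exact hadj
  · exact hadj
  · exact hu w hx v hy hadj

lemma ind_joinSet_true {u : Set W} (hu : IsInd G' u) (hav : ∀ w ∈ u, ¬ Dp w) :
    IsInd (step m G' Dp) (joinSet ∅ True u) := by
  rintro (i | ⟨e⟩ | w) hx (j | ⟨e'⟩ | v) hy hadj <;>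
    simp only [joinSet, Set.mem_setOf_eq, Sum.elim_inl, Sum.elim_inr,
      Set.mem_empty_iff_false] at hx hy <;> try exact hx.elim
  · exact hadj
  · exact hav v hy hadj
  · exact hav w hx hadj
  · exact hu w hx v hy hadj

open Classical in
noncomputable def stepEquiv (m : ℕ) (G' : SimpleGraph W) (Dp : W → Prop) :
    {s : Set (SV m W) // IsInd (step m G' Dp) s} ≃
    ({t : Set (Fin m) // IsInd (⊤ : SimpleGraph (Fin m)) t} × {u : Set W // IsInd G' u}) ⊕
    {u : Set W // IsInd G' u ∧ ∀ w ∈ u, ¬ Dp w} where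
  toFun s :=
    if he : Sum.inr (Sum.inl ()) ∈ s.1 then
      Sum.inr ⟨memW s.1, ind_memW s.2, avoid_memW s.2 he⟩
    else
      Sum.inl (⟨memA s.1, ind_memA s.2⟩, ⟨memW s.1, ind_memW s.2⟩)
  invFun x :=
    match x with
    | Sum.inl (t, u) => ⟨joinSet t.1 False u.1, ind_joinSet_false t.2 u.2⟩
    | Sum.inr u => ⟨joinSet ∅ True u.1, ind_joinSet_true u.2.1 u.2.2⟩
  left_inv := by
    rintro ⟨s, hs⟩
    by_cases he : Sum.inr (Sum.inl ()) ∈ s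
    · simp only [dif_pos he]
      apply Subtype.ext
      ext (i | ⟨e⟩ | w) <;>
        simp only [joinSet, Set.mem_setOf_eq, Sum.elim_inl, Sum.elim_inr, memW,
          Set.mem_empty_iff_false]
      · exact ⟨fun h => h.elim, fun h => (empty_memA hs he i h).elim⟩
      · exact ⟨fun _ => he, fun _ => trivial⟩
    · simp only [dif_neg he]
      apply Subtype.ext
      ext (i | ⟨e⟩ | w) <;>
        simp only [joinSet, Set.mem_setOf_eq, Sum.elim_inl, Sum.elim_inr, memA, memW]
      exact ⟨fun h => h.elim, fun h => he h⟩
  right_inv := by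
    rintro (⟨t, u⟩ | u)
    · have he : Sum.inr (Sum.inl ()) ∉ joinSet t.1 False u.1 := fun h => h
      simp only [dif_neg he]
      congr 1
    · have he : Sum.inr (Sum.inl ()) ∈ joinSet (∅ : Set (Fin m)) True u.1 := trivial
      simp only [dif_pos he]
      congr 1

end StepLemmas

section Counting

variable {m : ℕ} {G' : SimpleGraph W} {Dp : W → Prop}

open Classical in
noncomputable def topEquiv (m : ℕ) :
    {t : Set (Fin m) // IsInd (⊤ : SimpleGraph (Fin m)) t} ≃ Option (Fin m) where
  toFun t := if h : ∃ i, i ∈ t.1 then some h.choose else none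
  invFun x :=
    match x with
    | none => ⟨∅, by intro x hx; exact hx.elim⟩
    | some i => ⟨{i}, by
        intro x hx y hy hadj
        rw [Set.mem_singleton_iff] at hx hy
        exact (SimpleGraph.top_adj x y).1 hadj (hx.trans hy.symm)⟩
  left_inv := by
    rintro ⟨t, ht⟩
    by_cases h : ∃ i, i ∈ t
    · simp only [dif_pos h]
      apply Subtype.ext
      ext j
      simp only [Set.mem_singleton_iff]
      constructor
      · rintro rfl; exact h.choose_spec
      · intro hj
        by_contra hne
        exact ht j hj h.choose h.choose_spec ((SimpleGraph.top_adj _ _).2 hne)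
    · simp only [dif_neg h]
      apply Subtype.ext
      ext j
      simp only [Set.mem_empty_iff_false, false_iff]
      exact fun hj => h ⟨j, hj⟩
  right_inv := by
    rintro (_ | i)
    · have h : ¬ ∃ i : Fin m, i ∈ (∅ : Set (Fin m)) := by simp
      simp only [dif_neg h]
    · have h : ∃ j : Fin m, j ∈ ({i} : Set (Fin m)) := ⟨i, rfl⟩
      simp only [dif_pos h]
      have := h.choose_spec
      rw [Set.mem_singleton_iff] at this
      rw [this]

lemma numIndep_top (m : ℕ) : numIndep (⊤ : SimpleGraph (Fin m)) = m + 1 := by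
  rw [numIndep_def, Nat.card_congr (topEquiv m)]
  simp

lemma avoid_top (m : ℕ) : avoidCount (⊤ : SimpleGraph (Fin m)) (fun _ => True) = 1 := by
  have E : {s : Set (Fin m) // IsInd (⊤ : SimpleGraph (Fin m)) s ∧ ∀ v ∈ s, ¬ True} ≃ PUnit.{1} :=
    { toFun := fun _ => PUnit.unit
      invFun := fun _ => ⟨∅, ⟨fun x hx => hx.elim, fun v hv => hv.elim⟩⟩
      left_inv := by
        rintro ⟨s, hs, hav⟩
        apply Subtype.ext
        ext v
        simp only [Set.mem_empty_iff_false, false_iff]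
        exact fun hv => hav v hv trivial
      right_inv := fun _ => rfl }
  rw [avoidCount, Nat.card_congr E, Nat.card_eq_fintype_card]
  simp

lemma numIndep_step [Finite W] :
    numIndep (step m G' Dp) = (m + 1) * numIndep G' + avoidCount G' Dp := by
  rw [numIndep_def, Nat.card_congr (stepEquiv m G' Dp), Nat.card_sum, Nat.card_prod,
    ← numIndep_def, ← numIndep_def, numIndep_top, avoidCount]

noncomputable def avoidStepEquiv (m : ℕ) (G' : SimpleGraph W) (Dp : W → Prop) :
    {s : Set (SV m W) // IsInd (step m G' Dp) s ∧ ∀ v ∈ s, ¬ stepD m W v} ≃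
    {u : Set W // IsInd G' u} where
  toFun s := ⟨memW s.1, ind_memW s.2.1⟩
  invFun u := ⟨joinSet ∅ False u.1, by
    refine ⟨ind_joinSet_false (fun x hx => hx.elim) u.2, ?_⟩
    rintro (i | ⟨e⟩ | w) hv <;>
      simp only [joinSet, Set.mem_setOf_eq, Sum.elim_inl, Sum.elim_inr,
        Set.mem_empty_iff_false] at hv
    exact fun h => h⟩
  left_inv := by
    rintro ⟨s, hs, hav⟩
    apply Subtype.ext
    ext (i | ⟨e⟩ | w) <;>
      simp only [joinSet, Set.mem_setOf_eq, Sum.elim_inl, Sum.elim_inr, memW,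
        Set.mem_empty_iff_false]
    · exact ⟨fun h => h.elim, fun h => hav _ h trivial⟩
    · exact ⟨fun h => h.elim, fun h => hav _ h trivial⟩
  right_inv := by rintro ⟨u, hu⟩; rfl

lemma avoid_step [Finite W] :
    avoidCount (step m G' Dp) (stepD m W) = numIndep G' := by
  rw [avoidCount, Nat.card_congr (avoidStepEquiv m G' Dp), ← numIndep_def]

lemma card_SV [Finite W] : Nat.card (SV m W) = m + 1 + Nat.card W := by
  rw [Nat.card_sum, Nat.card_sum]
  simp [add_assoc]

lemma card_stepD [Finite W] : Nat.card {v : SV m W // stepD m W v} = m + 1 := by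
  have E : {v : SV m W // stepD m W v} ≃ (Fin m ⊕ Unit) :=
    { toFun := fun v =>
        match v with
        | ⟨Sum.inl i, _⟩ => Sum.inl i
        | ⟨Sum.inr (Sum.inl _), _⟩ => Sum.inr ()
        | ⟨Sum.inr (Sum.inr _), h⟩ => h.elim
      invFun := fun x =>
        match x with
        | Sum.inl i => ⟨Sum.inl i, trivial⟩
        | Sum.inr _ => ⟨Sum.inr (Sum.inl ()), trivial⟩
      left_inv := by rintro ⟨(i | ⟨e⟩ | w), h⟩ <;> first | rfl | exact h.elim
      right_inv := by rintro (i | ⟨e⟩) <;> rfl }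
  rw [Nat.card_congr E, Nat.card_sum]
  simp

lemma card_dTrue (m : ℕ) : Nat.card {v : Fin m // (fun _ => True) v} = m := by
  rw [Nat.card_congr (Equiv.subtypeUnivEquiv (fun v => trivial))]
  simp

end Counting

section Pairs

variable {m : ℕ} {G' : SimpleGraph W} {Dp : W → Prop}

open Classical in
lemma card_ne_pairs (m : ℕ) :
    Nat.card {p : Fin m × Fin m // p.1 ≠ p.2} + m = m * m := by
  show Nat.card {p : Fin m × Fin m // ¬ p.1 = p.2} + m = m * m
  have E := Equiv.sumCompl (fun p : Fin m × Fin m => p.1 = p.2)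
  have h1 : Nat.card ({p : Fin m × Fin m // p.1 = p.2} ⊕ {p : Fin m × Fin m // ¬ p.1 = p.2})
      = m * m := by
    rw [Nat.card_congr E]
    simp [Nat.card_prod]
  have hdiag : Nat.card {p : Fin m × Fin m // p.1 = p.2} = m := by
    have E2 : {p : Fin m × Fin m // p.1 = p.2} ≃ Fin m :=
      { toFun := fun p => p.1.1
        invFun := fun i => ⟨(i, i), rfl⟩
        left_inv := by rintro ⟨⟨a, b⟩, h⟩; cases h; rfl
        right_inv := fun i => rfl }
    rw [Nat.card_congr E2]; simp
  rw [Nat.card_sum, hdiag] at h1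
  omega

lemma pairCount_top (m : ℕ) :
    pairCount (⊤ : SimpleGraph (Fin m)) + m = m * m := by
  rw [pairCount]
  rw [Nat.card_congr (Equiv.subtypeEquivRight (p := fun p : Fin m × Fin m => (⊤ : SimpleGraph (Fin m)).Adj p.1 p.2) (q := fun p => ¬ p.1 = p.2) (fun p => by simp))]
  show Nat.card {p : Fin m × Fin m // ¬ p.1 = p.2} + m = m * m
  exact card_ne_pairs m

lemma not_adj_AW {m : ℕ} {G' : SimpleGraph W} {Dp : W → Prop} {i : Fin m} {w : W} :
    ¬ (step m G' Dp).Adj (Sum.inl i) (Sum.inr (Sum.inr w)) := fun h => h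

lemma not_adj_WA {m : ℕ} {G' : SimpleGraph W} {Dp : W → Prop} {i : Fin m} {w : W} :
    ¬ (step m G' Dp).Adj (Sum.inr (Sum.inr w)) (Sum.inl i) := fun h => h

lemma not_adj_ee {m : ℕ} {G' : SimpleGraph W} {Dp : W → Prop} {u u' : Unit} :
    ¬ (step m G' Dp).Adj (Sum.inr (Sum.inl u)) (Sum.inr (Sum.inl u')) := fun h => h

abbrev pairTarget (m : ℕ) (W : Type) (G' : SimpleGraph W) (Dp : W → Prop) : Type :=
  ({p : Fin m × Fin m // (⊤ : SimpleGraph (Fin m)).Adj p.1 p.2} ⊕ (Fin m ⊕ Fin m)) ⊕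
      (({w // Dp w} ⊕ {w // Dp w}) ⊕ {p : W × W // G'.Adj p.1 p.2})

def pairInj (m : ℕ) (G' : SimpleGraph W) (Dp : W → Prop) :
    {p : SV m W × SV m W // (step m G' Dp).Adj p.1 p.2} → pairTarget m W G' Dp
  | ⟨(Sum.inl i, Sum.inl j), h⟩ => Sum.inl (Sum.inl ⟨(i, j), by simpa using (show i ≠ j from h)⟩)
  | ⟨(Sum.inl i, Sum.inr (Sum.inl _)), _⟩ => Sum.inl (Sum.inr (Sum.inl i))
  | ⟨(Sum.inl _, Sum.inr (Sum.inr _)), h⟩ => absurd h not_adj_AW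
  | ⟨(Sum.inr (Sum.inl _), Sum.inl j), _⟩ => Sum.inl (Sum.inr (Sum.inr j))
  | ⟨(Sum.inr (Sum.inl _), Sum.inr (Sum.inl _)), h⟩ => absurd h not_adj_ee
  | ⟨(Sum.inr (Sum.inl _), Sum.inr (Sum.inr v)), h⟩ => Sum.inr (Sum.inl (Sum.inl ⟨v, h⟩))
  | ⟨(Sum.inr (Sum.inr _), Sum.inl _), h⟩ => absurd h not_adj_WA
  | ⟨(Sum.inr (Sum.inr w), Sum.inr (Sum.inl _)), h⟩ => Sum.inr (Sum.inl (Sum.inr ⟨w, h⟩))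
  | ⟨(Sum.inr (Sum.inr w), Sum.inr (Sum.inr v)), h⟩ => Sum.inr (Sum.inr ⟨(w, v), h⟩)

def pairDec (m : ℕ) (G' : SimpleGraph W) (Dp : W → Prop) :
    pairTarget m W G' Dp → SV m W × SV m W
  | Sum.inl (Sum.inl ⟨(i, j), _⟩) => (Sum.inl i, Sum.inl j)
  | Sum.inl (Sum.inr (Sum.inl i)) => (Sum.inl i, Sum.inr (Sum.inl ()))
  | Sum.inl (Sum.inr (Sum.inr j)) => (Sum.inr (Sum.inl ()), Sum.inl j)
  | Sum.inr (Sum.inl (Sum.inl ⟨v, _⟩)) => (Sum.inr (Sum.inl ()), Sum.inr (Sum.inr v))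
  | Sum.inr (Sum.inl (Sum.inr ⟨w, _⟩)) => (Sum.inr (Sum.inr w), Sum.inr (Sum.inl ()))
  | Sum.inr (Sum.inr ⟨(w, v), _⟩) => (Sum.inr (Sum.inr w), Sum.inr (Sum.inr v))

lemma pairDec_pairInj (m : ℕ) (G' : SimpleGraph W) (Dp : W → Prop)
    (x : {p : SV m W × SV m W // (step m G' Dp).Adj p.1 p.2}) :
    pairDec m G' Dp (pairInj m G' Dp x) = x.1 := by
  obtain ⟨⟨(i | ⟨e⟩ | w), (j | ⟨e'⟩ | v)⟩, h⟩ := x <;>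
    first
      | exact absurd h not_adj_AW
      | exact absurd h not_adj_WA
      | exact absurd h not_adj_ee
      | rfl

lemma pairInj_injective (m : ℕ) (G' : SimpleGraph W) (Dp : W → Prop) :
    Function.Injective (pairInj m G' Dp) := by
  intro x y heq
  apply Subtype.ext
  rw [← pairDec_pairInj m G' Dp x, ← pairDec_pairInj m G' Dp y, heq]

lemma pairCount_step [Finite W] :
    pairCount (step m G' Dp) ≤
      pairCount (⊤ : SimpleGraph (Fin m)) + 2 * m + 2 * Nat.card {w // Dp w}
        + pairCount G' := by
  classical
  have := Nat.card_le_card_of_injective _ (pairInj_injective m G' Dp)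
  calc pairCount (step m G' Dp) ≤ Nat.card (pairTarget m W G' Dp) := this
    _ ≤ _ := by
      rw [Nat.card_sum, Nat.card_sum, Nat.card_sum, Nat.card_sum, Nat.card_sum]
      have h1 : Nat.card {p : Fin m × Fin m // (⊤ : SimpleGraph (Fin m)).Adj p.1 p.2}
          = pairCount (⊤ : SimpleGraph (Fin m)) := rfl
      have h2 : Nat.card {p : W × W // G'.Adj p.1 p.2} = pairCount G' := rfl
      rw [h1, h2]
      simp only [Nat.card_eq_fintype_card, Fintype.card_fin, Fintype.card_unit]
      omega

end Pairs

section Conn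

variable {m : ℕ} {G' : SimpleGraph W} {Dp : W → Prop}

lemma step_connected (h : IsEmpty W ∨ (G'.Connected ∧ ∃ w, Dp w)) :
    (step m G' Dp).Connected := by
  rw [SimpleGraph.connected_iff_exists_forall_reachable]
  refine ⟨Sum.inr (Sum.inl ()), ?_⟩
  rintro (i | ⟨e⟩ | w)
  · exact (SimpleGraph.Adj.reachable (by exact trivial : (step m G' Dp).Adj
      (Sum.inr (Sum.inl ())) (Sum.inl i)))
  · rfl
  · rcases h with hW | ⟨hconn, w₀, hw₀⟩
    · exact (hW.elim w)
    · have h1 := (hconn.preconnected w₀ w).map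
        (⟨fun w => Sum.inr (Sum.inr w), fun hadj => hadj⟩ : G' →g step m G' Dp)
      have h2 : (step m G' Dp).Adj (Sum.inr (Sum.inl ())) (Sum.inr (Sum.inr w₀)) := hw₀
      exact h2.reachable.trans h1
end Conn

/-- continuant -/
def cQ : List ℕ → ℕ
  | [] => 1
  | [a] => a
  | a :: b :: M => a * cQ (b :: M) + cQ M

lemma cQ_pos (L : List ℕ) (h : ∀ a ∈ L, 1 ≤ a) : 1 ≤ cQ L := by
  match L with
  | [] => simp [cQ]
  | [a] => simpa [cQ] using h a (by simp)
  | a :: b :: M =>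
    have h1 := cQ_pos (b :: M) (fun x hx => h x (by simp [hx]))
    have ha := h a (by simp)
    simp only [cQ]
    nlinarith

lemma contFrac_eq (a : ℕ) (M : List ℕ) (h : ∀ x ∈ (a :: M), 1 ≤ x) :
    contFrac (a :: M) = (cQ M : ℚ) / cQ (a :: M) := by
  match M with
  | [] => simp [contFrac, cQ]
  | b :: M' =>
    have h' : ∀ x ∈ (b :: M'), 1 ≤ x := fun x hx => h x (by simp [hx])
    have IH := contFrac_eq b M' h'
    have hbM : (0:ℚ) < cQ (b :: M') := by exact_mod_cast cQ_pos (b :: M') h'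
    have hM' : (0:ℚ) ≤ cQ M' := by positivity
    have ha : (1:ℚ) ≤ a := by exact_mod_cast h a (by simp)
    show 1 / ((a : ℚ) + contFrac (b :: M')) = _
    rw [IH]
    show _ = (cQ (b :: M') : ℚ) / ((a * cQ (b :: M') + cQ M' : ℕ) : ℚ)
    push_cast
    have h2 : ((a:ℚ) + (cQ M') / (cQ (b :: M'))) ≠ 0 := by positivity
    field_simp

lemma cQ_coprime (a : ℕ) (M : List ℕ) : Nat.gcd (cQ M) (cQ (a :: M)) = 1 := by
  match M with
  | [] => simp [cQ]
  | b :: M' =>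
    have IH := cQ_coprime b M'
    show Nat.gcd (cQ (b :: M')) (a * cQ (b :: M') + cQ M') = 1
    rw [Nat.add_comm, Nat.gcd_add_mul_right_right]
    rw [Nat.gcd_comm]
    exact IH

noncomputable def phi : ℝ := (1 + Real.sqrt 5) / 2

lemma sqrt5_lt : Real.sqrt 5 < 3 := by
  have h9 : (3:ℝ) = Real.sqrt 9 := by
    rw [show (9:ℝ) = 3^2 by norm_num, Real.sqrt_sq (by norm_num)]
  rw [h9]
  exact Real.sqrt_lt_sqrt (by norm_num) (by norm_num)

lemma sqrt5_gt : 2 < Real.sqrt 5 := by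
  have h4 : (2:ℝ) = Real.sqrt 4 := by
    rw [show (4:ℝ) = 2^2 by norm_num, Real.sqrt_sq (by norm_num)]
  rw [h4]
  exact Real.sqrt_lt_sqrt (by norm_num) (by norm_num)

lemma one_lt_phi : 1 < phi := by unfold phi; nlinarith [sqrt5_gt]
lemma phi_pos : 0 < phi := zero_lt_one.trans one_lt_phi
lemma phi_le_two : phi ≤ 2 := by unfold phi; nlinarith [sqrt5_lt]
lemma phi_sq : phi * phi = phi + 1 := by
  have h5 : Real.sqrt 5 ^ 2 = 5 := Real.sq_sqrt (by norm_num)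
  unfold phi; nlinarith [h5]

lemma rpow_mono {x y : ℝ} (h : x ≤ y) : phi ^ x ≤ phi ^ y :=
  Real.rpow_le_rpow_of_exponent_le one_lt_phi.le h

lemma phi_rpow_one : phi ^ (1:ℝ) = phi := Real.rpow_one phi

lemma phi_rpow_two : phi ^ (2:ℝ) = phi + 1 := by
  rw [show (2:ℝ) = ((2:ℕ):ℝ) by norm_num, Real.rpow_natCast]
  rw [pow_two]; exact phi_sq

lemma cQ_ge_phi (L : List ℕ) (hne : L ≠ []) (h : ∀ a ∈ L, 1 ≤ a ∧ a ≤ 5) :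
    phi ^ (((L.sum : ℝ) - 1) / 5) ≤ (cQ L : ℝ) := by
  match L with
  | [a] =>
    obtain ⟨ha1, ha5⟩ := h a (by simp)
    have ha5' : (a:ℝ) ≤ 5 := by exact_mod_cast ha5
    have hsum : ((List.sum [a] : ℕ) : ℝ) = (a:ℝ) := by simp
    rw [hsum, show cQ [a] = a from rfl]
    rcases Nat.eq_or_lt_of_le ha1 with ha | ha2
    · rw [← ha]; norm_num
    · calc phi ^ (((a:ℝ)-1)/5) ≤ phi ^ (1:ℝ) := rpow_mono (by linarith)
        _ = phi := phi_rpow_one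
        _ ≤ 2 := phi_le_two
        _ ≤ a := by exact_mod_cast ha2
  | [a, b] =>
    obtain ⟨ha1, ha5⟩ := h a (by simp)
    obtain ⟨hb1, hb5⟩ := h b (by simp)
    have ha5' : (a:ℝ) ≤ 5 := by exact_mod_cast ha5
    have hb5' : (b:ℝ) ≤ 5 := by exact_mod_cast hb5
    have hsum : ((List.sum [a, b] : ℕ) : ℝ) = (a:ℝ) + b := by push_cast [List.sum_cons, List.sum_nil]; ring
    rw [hsum, show cQ [a, b] = a * b + 1 from by simp [cQ]]
    have hab : 1 ≤ a * b := Nat.one_le_iff_ne_zero.2 (by positivity)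
    rcases Nat.eq_or_lt_of_le hab with hab1 | hab2
    · obtain rfl := Nat.eq_one_of_mul_eq_one_right hab1.symm
      obtain rfl := Nat.eq_one_of_mul_eq_one_left (hab1.symm : 1 * b = 1)
      push_cast
      calc phi ^ (((1:ℝ)+1-1)/5) ≤ phi ^ (1:ℝ) := rpow_mono (by norm_num [one_lt_phi])
        _ = phi := phi_rpow_one
        _ ≤ 2 := phi_le_two
        _ = ((1*1+1 : ℕ):ℝ) := by norm_num
    · calc phi ^ (((a:ℝ)+b-1)/5) ≤ phi ^ (2:ℝ) := rpow_mono (by linarith)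
        _ = phi + 1 := phi_rpow_two
        _ ≤ 3 := by linarith [phi_le_two]
        _ ≤ ((a*b+1 : ℕ):ℝ) := by exact_mod_cast Nat.succ_le_succ hab2
  | a :: b :: c :: M =>
    obtain ⟨ha1, ha5⟩ := h a (by simp)
    obtain ⟨hb1, hb5⟩ := h b (by simp)
    have IH1 := cQ_ge_phi (b :: c :: M) (by simp) (fun x hx => h x (List.mem_cons_of_mem _ hx))
    have IH2 := cQ_ge_phi (c :: M) (by simp) (fun x hx => h x (List.mem_cons_of_mem _ (List.mem_cons_of_mem _ hx)))
    have hcq : cQ (a :: b :: c :: M) = a * cQ (b :: c :: M) + cQ (c :: M) := rfl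
    have hs1 : ((List.sum (a :: b :: c :: M) : ℕ) : ℝ)
        = (a:ℝ) + ((List.sum (b :: c :: M) : ℕ) : ℝ) := by push_cast [List.sum_cons, List.sum_nil]; ring
    have hs2 : ((List.sum (b :: c :: M) : ℕ) : ℝ)
        = (b:ℝ) + ((List.sum (c :: M) : ℕ) : ℝ) := by push_cast [List.sum_cons, List.sum_nil]; ring
    set s1 : ℝ := ((List.sum (b :: c :: M) : ℕ) : ℝ) with hs1d
    set s2 : ℝ := ((List.sum (c :: M) : ℕ) : ℝ) with hs2d
    have ha5' : (a:ℝ) ≤ 5 := by exact_mod_cast ha5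
    have hb5' : (b:ℝ) ≤ 5 := by exact_mod_cast hb5
    have hb1' : (1:ℝ) ≤ b := by exact_mod_cast hb1
    have hQ1 : (0:ℝ) ≤ cQ (b :: c :: M) := by positivity
    have hQ2 : (0:ℝ) ≤ cQ (c :: M) := by positivity
    rw [hs1, hcq]
    push_cast
    rcases Nat.eq_or_lt_of_le ha1 with haa | ha2
    · -- a = 1
      rw [← haa]
      push_cast
      have key : phi ^ ((s1 - 6)/5) + phi ^ ((s1 - 1)/5) ≤ cQ (c :: M) + cQ (b :: c :: M) := by
        have h2 : phi ^ ((s1 - 6)/5) ≤ phi ^ ((s2 - 1)/5) := by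
          apply rpow_mono
          rw [hs2]; linarith
        have := h2.trans IH2
        linarith [IH1]
      calc phi ^ ((1 + s1 - 1)/5)
          ≤ phi ^ ((s1 + 4)/5) := rpow_mono (by linarith)
        _ = phi ^ ((s1 - 6)/5) * phi ^ (2:ℝ) := by
            rw [← Real.rpow_add phi_pos]; ring_nf
        _ = phi ^ ((s1 - 6)/5) * (phi + 1) := by rw [phi_rpow_two]
        _ = phi ^ ((s1 - 6)/5) * phi + phi ^ ((s1 - 6)/5) := by ring
        _ = phi ^ ((s1 - 6)/5 + 1) + phi ^ ((s1 - 6)/5) := by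
            rw [Real.rpow_add phi_pos, Real.rpow_one]
        _ ≤ phi ^ ((s1 - 1)/5) + phi ^ ((s1 - 6)/5) := by
            have : phi ^ ((s1 - 6)/5 + 1) ≤ phi ^ ((s1 - 1)/5) := rpow_mono (by linarith)
            linarith
        _ ≤ ((cQ (b :: c :: M) : ℝ)) + cQ (c :: M) := by linarith [key]
        _ ≤ 1 * cQ (b :: c :: M) + cQ (c :: M) := by linarith
    · -- a ≥ 2
      have ha2' : (2:ℝ) ≤ a := by exact_mod_cast ha2
      calc phi ^ (((a:ℝ) + s1 - 1)/5)
          = phi ^ ((a:ℝ)/5) * phi ^ ((s1 - 1)/5) := by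
            rw [← Real.rpow_add phi_pos]; ring_nf
        _ ≤ phi ^ (1:ℝ) * phi ^ ((s1-1)/5) := by
            apply mul_le_mul_of_nonneg_right (rpow_mono (by linarith)) (Real.rpow_nonneg phi_pos.le _)
        _ = phi * phi ^ ((s1-1)/5) := by rw [phi_rpow_one]
        _ ≤ (a:ℝ) * (cQ (b :: c :: M)) := by
            apply mul_le_mul (by linarith [phi_le_two]) IH1 (Real.rpow_nonneg phi_pos.le _) (by linarith)
        _ ≤ (a:ℝ) * cQ (b :: c :: M) + cQ (c :: M) := by linarith

/-! ## The recursive graph family -/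

def Vt : List ℕ → Type
  | [] => Empty
  | [a] => Fin (a - 1)
  | a :: b :: M => SV (a - 1) (Vt (b :: M))

def finVt : ∀ L, Finite (Vt L)
  | [] => inferInstanceAs (Finite Empty)
  | [_] => inferInstanceAs (Finite (Fin _))
  | _ :: b :: M => by
      have := finVt (b :: M)
      exact inferInstanceAs (Finite (_ ⊕ (_ ⊕ _)))

instance instFinVt (L : List ℕ) : Finite (Vt L) := finVt L

def DL : ∀ L : List ℕ, Vt L → Prop
  | [] => fun _ => True
  | [_] => fun _ => True
  | _ :: _ :: _ => stepD _ _

def Hg : ∀ L : List ℕ, SimpleGraph (Vt L)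
  | [] => ⊥
  | [_] => ⊤
  | a :: b :: M => step (a - 1) (Hg (b :: M)) (DL (b :: M))

lemma numIndep_Hg : ∀ L : List ℕ, L ≠ [] → (∀ a ∈ L, 1 ≤ a) →
    numIndep (Hg L) = cQ L ∧ avoidCount (Hg L) (DL L) = cQ L.tail
  | [], h, _ => absurd rfl h
  | [a], _, hd => by
      have ha := hd a (by simp)
      constructor
      · show numIndep (⊤ : SimpleGraph (Fin (a-1))) = cQ [a]
        rw [numIndep_top]
        show a - 1 + 1 = a
        omega
      · show avoidCount (⊤ : SimpleGraph (Fin (a-1))) (fun _ => True) = cQ []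
        rw [avoid_top]
        rfl
  | a :: b :: M, _, hd => by
      have ha := hd a (by simp)
      obtain ⟨IH1, IH2⟩ := numIndep_Hg (b :: M) (by simp) (fun x hx => hd x (by simp [hx]))
      constructor
      · show numIndep (step (a-1) (Hg (b :: M)) (DL (b :: M))) = cQ (a :: b :: M)
        rw [numIndep_step, IH1, IH2]
        show (a - 1 + 1) * cQ (b :: M) + cQ M = a * cQ (b :: M) + cQ M
        congr 2
        omega
      · show avoidCount (step (a-1) (Hg (b :: M)) (DL (b :: M))) (stepD _ _) = cQ (b :: M)
        rw [avoid_step, IH1]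

lemma card_Vt : ∀ L : List ℕ, L ≠ [] → (∀ a ∈ L, 1 ≤ a) →
    Nat.card (Vt L) + 1 = L.sum
  | [], h, _ => absurd rfl h
  | [a], _, hd => by
      have ha := hd a (by simp)
      show Nat.card (Fin (a-1)) + 1 = a + 0
      simp only [Nat.card_eq_fintype_card, Fintype.card_fin]
      omega
  | a :: b :: M, _, hd => by
      have ha := hd a (by simp)
      have IH := card_Vt (b :: M) (by simp) (fun x hx => hd x (by simp [hx]))
      show Nat.card (SV (a-1) (Vt (b :: M))) + 1 = a + (b :: M).sum
      rw [card_SV]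
      omega

lemma dcount_Hg : ∀ L : List ℕ, L ≠ [] → (∀ a ∈ L, 1 ≤ a ∧ a ≤ 5) →
    Nat.card {v : Vt L // DL L v} ≤ 5
  | [], h, _ => absurd rfl h
  | [a], _, hd => by
      have ha := (hd a (by simp)).2
      show Nat.card {v : Fin (a-1) // (fun _ => True) v} ≤ 5
      rw [card_dTrue]
      omega
  | a :: b :: M, _, hd => by
      have ha := (hd a (by simp)).2
      show Nat.card {v : SV (a-1) (Vt (b :: M)) // stepD _ _ v} ≤ 5
      rw [card_stepD]
      omega

lemma pairCount_Hg : ∀ L : List ℕ, L ≠ [] → (∀ a ∈ L, 1 ≤ a ∧ a ≤ 5) →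
    pairCount (Hg L) + 2 * Nat.card {v : Vt L // DL L v} + 6 ≤ 6 * L.sum
  | [], h, _ => absurd rfl h
  | [a], _, hd => by
      obtain ⟨ha1, ha5⟩ := hd a (by simp)
      show pairCount (⊤ : SimpleGraph (Fin (a-1)))
        + 2 * Nat.card {v : Fin (a-1) // (fun _ => True) v} + 6 ≤ 6 * ([a].sum)
      rw [card_dTrue]
      have hp := pairCount_top (a-1)
      have hm : a - 1 ≤ 4 := by omega
      simp only [List.sum_cons, List.sum_nil]
      set m := a - 1 with hmdef
      have haa : a = m + 1 := by omega
      rw [haa]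
      interval_cases m <;> omega
  | a :: b :: M, _, hd => by
      obtain ⟨ha1, ha5⟩ := hd a (by simp)
      have IH := pairCount_Hg (b :: M) (by simp) (fun x hx => hd x (by simp [hx]))
      show pairCount (step (a-1) (Hg (b :: M)) (DL (b :: M)))
        + 2 * Nat.card {v : SV (a-1) (Vt (b :: M)) // stepD _ _ v} + 6 ≤ 6 * ((a :: b :: M).sum)
      rw [card_stepD]
      have hstep := pairCount_step (m := a - 1) (G' := Hg (b :: M)) (Dp := DL (b :: M))
      have hp := pairCount_top (a-1)
      have hm : a - 1 ≤ 4 := by omega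
      have hsum : (a :: b :: M).sum = a + (b :: M).sum := by simp
      rw [hsum]
      set m := a - 1 with hmdef
      have haa : a = m + 1 := by omega
      rw [haa]
      interval_cases m <;> omega

lemma conn_Hg : ∀ L : List ℕ, L ≠ [] →
    (Nonempty (Vt L) → (Hg L).Connected) ∧ (Nonempty (Vt L) → ∃ v, DL L v)
  | [], h => absurd rfl h
  | [a], _ => by
      constructor
      · intro hne
        exact @SimpleGraph.connected_top (Fin (a-1)) hne
      · intro hne
        exact ⟨hne.some, trivial⟩
  | a :: b :: M, _ => by
      obtain ⟨IH1, IH2⟩ := conn_Hg (b :: M) (by simp)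
      constructor
      · intro _
        apply step_connected
        rcases isEmpty_or_nonempty (Vt (b :: M)) with hW | hW
        · exact Or.inl hW
        · exact Or.inr ⟨IH1 hW, IH2 hW⟩
      · intro _
        exact ⟨Sum.inr (Sum.inl ()), trivial⟩

/-! ## Transport to `Fin n` -/

lemma two_mul_card_edgeSet {V : Type} [Fintype V] (G : SimpleGraph V) :
    2 * Nat.card G.edgeSet = pairCount G := by
  classical
  have E : G.Dart ≃ {p : V × V // G.Adj p.1 p.2} :=
    { toFun := fun d => ⟨d.toProd, d.adj⟩
      invFun := fun p => ⟨p.1, p.2⟩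
      left_inv := fun d => rfl
      right_inv := fun p => rfl }
  have h1 : pairCount G = Fintype.card G.Dart := by
    rw [pairCount, ← Nat.card_eq_fintype_card, Nat.card_congr E.symm]
  rw [h1, SimpleGraph.dart_card_eq_twice_card_edges, SimpleGraph.edgeFinset_card,
    Nat.card_eq_fintype_card]

lemma numIndep_of_isEmpty {V : Type} [IsEmpty V] (G : SimpleGraph V) : numIndep G = 1 := by
  rw [numIndep_def]
  have E : {s : Set V // IsInd G s} ≃ PUnit.{1} :=
    { toFun := fun _ => PUnit.unit
      invFun := fun _ => ⟨∅, fun x hx => (IsEmpty.false x).elim⟩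
      left_inv := by
        rintro ⟨s, hs⟩
        apply Subtype.ext
        ext v
        exact (IsEmpty.false v).elim
      right_inv := fun _ => rfl }
  rw [Nat.card_congr E]
  simp

lemma transport {V : Type} [Finite V] (G : SimpleGraph V) :
    ∃ G' : SimpleGraph (Fin (Nat.card V)),
      (G.Connected → G'.Connected) ∧ numIndep G' = numIndep G ∧
        2 * Nat.card G'.edgeSet = pairCount G := by
  classical
  have : Fintype V := Fintype.ofFinite V
  let e : V ≃ Fin (Nat.card V) := Finite.equivFin V
  refine ⟨G.comap e.symm, ?_, ?_, ?_⟩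
  · intro hconn
    rw [SimpleGraph.connected_iff_exists_forall_reachable]
    rcases hconn.nonempty with ⟨v⟩
    refine ⟨e v, ?_⟩
    intro x
    have h := (hconn.preconnected v (e.symm x)).map
      (⟨fun u => e u, fun {u w} hadj => by
        have : G.Adj (e.symm (e u)) (e.symm (e w)) := by simpa using hadj
        exact this⟩ : G →g G.comap e.symm)
    have h2 : (SimpleGraph.comap (⇑e.symm) G).Reachable (e v) (e (e.symm x)) := h
    simpa using h2
  · rw [numIndep_def, numIndep_def]
    apply Nat.card_congr
    refine
      { toFun := fun s => ⟨e.symm '' s.1, ?_⟩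
        invFun := fun t => ⟨e '' t.1, ?_⟩
        left_inv := ?_
        right_inv := ?_ }
    · rintro x ⟨x', hx', rfl⟩ y ⟨y', hy', rfl⟩ hadj
      exact s.2 x' hx' y' hy' hadj
    · rintro x ⟨x', hx', rfl⟩ y ⟨y', hy', rfl⟩ hadj
      refine t.2 x' hx' y' hy' ?_
      have hadj' : G.Adj (e.symm (e x')) (e.symm (e y')) := hadj
      simpa using hadj'
    · rintro ⟨s, hs⟩
      apply Subtype.ext
      show e '' (e.symm '' s) = s
      rw [Set.image_image]
      simp
    · rintro ⟨t, ht⟩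
      apply Subtype.ext
      show e.symm '' (e '' t) = t
      rw [Set.image_image]
      simp
  · rw [two_mul_card_edgeSet]
    unfold pairCount
    apply Nat.card_congr
    exact
      { toFun := fun p => ⟨(e.symm p.1.1, e.symm p.1.2), p.2⟩
        invFun := fun p => ⟨(e p.1.1, e p.1.2), by
          show G.Adj (e.symm (e p.1.1)) (e.symm (e p.1.2))
          simpa using p.2⟩
        left_inv := by rintro ⟨⟨x, y⟩, h⟩; simp
        right_inv := by rintro ⟨⟨x, y⟩, h⟩; simp }



/-- For every `q ∈ Q₅` with `q ≥ 2` there is a connected graph `G` with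
`i(G) = q`, at most `5 log_φ q` vertices and at most `3 |V(G)|` edges. -/
theorem exists_connected_planarlike_graph_of_mem_QSet_five (q : ℕ) (hq : 2 ≤ q)
    (hQ : q ∈ QSet 5) :
    ∃ (n : ℕ) (G : SimpleGraph (Fin n)), G.Connected ∧ numIndep G = q ∧
      (n : ℝ) ≤ 5 * (Real.log q / Real.log ((1 + Real.sqrt 5) / 2)) ∧
      Nat.card G.edgeSet ≤ 3 * n := by
  rcases hQ with h1 | ⟨p, hp1, hpq, hgcd, L, hLne, hdig, hcf⟩
  · omega
  cases L with
  | nil => exact absurd rfl hLne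
  | cons a M =>
  have hd1 : ∀ x ∈ (a :: M), 1 ≤ x := fun x hx => (hdig x hx).1
  -- q equals the continuant
  have hcq : contFrac (a :: M) = (cQ M : ℚ) / cQ (a :: M) := contFrac_eq a M hd1
  have hQpos : 1 ≤ cQ (a :: M) := cQ_pos _ hd1
  have hMpos : 1 ≤ cQ M := cQ_pos _ (fun x hx => hd1 x (by simp [hx]))
  have hqQ : q = cQ (a :: M) := by
    have hcross : (cQ M : ℚ) * q = p * cQ (a :: M) := by
      rw [hcq] at hcf
      rw [div_eq_div_iff (by positivity : (0:ℚ) < (cQ (a :: M) : ℚ)).ne' (by positivity : (0:ℚ) < (q:ℚ)).ne'] at hcf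
      linarith [hcf]
    have hcrossN : cQ M * q = p * cQ (a :: M) := by exact_mod_cast hcross
    have hd1' : q ∣ cQ (a :: M) := by
      have hqp : Nat.Coprime q p := Nat.coprime_comm.mp hgcd
      exact hqp.dvd_of_dvd_mul_left ⟨cQ M, by rw [← hcrossN]; ring⟩
    have hd2 : cQ (a :: M) ∣ q := by
      have hco : Nat.Coprime (cQ (a :: M)) (cQ M) := Nat.coprime_comm.mp (cQ_coprime a M)
      exact hco.dvd_of_dvd_mul_left ⟨p, by rw [hcrossN]; ring⟩
    exact Nat.dvd_antisymm hd1' hd2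
  -- the graph
  have hnum : numIndep (Hg (a :: M)) = q := by
    rw [(numIndep_Hg (a :: M) (by simp) hd1).1, hqQ]
  have hcard : Nat.card (Vt (a :: M)) + 1 = (a :: M).sum := card_Vt _ (by simp) hd1
  set n := Nat.card (Vt (a :: M)) with hn
  obtain ⟨G', hconn', hni, hedge⟩ := transport (Hg (a :: M))
  have hne : Nonempty (Vt (a :: M)) := by
    by_contra h
    rw [not_nonempty_iff] at h
    have := numIndep_of_isEmpty (Hg (a :: M))
    omega
  refine ⟨n, G', ?_, ?_, ?_, ?_⟩
  · exact hconn' ((conn_Hg (a :: M) (by simp)).1 hne)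
  · rw [hni, hnum]
  · -- vertex bound
    have hφ := cQ_ge_phi (a :: M) (by simp) hdig
    have hexp : (((a :: M).sum : ℝ) - 1) / 5 = (n : ℝ) / 5 := by
      have : ((a :: M).sum : ℝ) = (n : ℝ) + 1 := by exact_mod_cast hcard.symm
      rw [this]; ring
    rw [hexp, ← hqQ] at hφ
    have hq0 : (0:ℝ) < q := by positivity
    have hlog := Real.log_le_log (Real.rpow_pos_of_pos phi_pos _) hφ
    rw [Real.log_rpow phi_pos] at hlog
    have hlogφ : 0 < Real.log phi := Real.log_pos one_lt_phi
    show (n : ℝ) ≤ 5 * (Real.log q / Real.log phi)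
    have h5 : (n : ℝ) / 5 ≤ Real.log q / Real.log phi := by
      rw [div_le_div_iff₀ (by norm_num) hlogφ]
      linarith
    linarith
  · -- edge bound
    have hpair := pairCount_Hg (a :: M) (by simp) hdig
    omega
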